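/- Fix n ≥ 2, let G be a graph, ω a placement function on G, and f : V(G) → V(C) satisfying (C1) and (C2). Let w_0,…,w_k be a wrapping pattern in G. Then exactly one of the following holds: (a) there exist ℓ ∈ {1,…,n} and j ≥ 0 such that f(w_p) = C(ℓ, j+p) for all p ∈ {0,…,k}; or (b) there exist ℓ ∈ {1,…,n} and j ≥ k such that f(w_p) = C(ℓ, j−p) for all p ∈ {0,…,k}; or (c) there exist distinct ℓ₁, ℓ₂ ∈ {1,…,n} and j₁, j₂ ≥ 1 with j₁ + j₂ ≤ k such that f(w_p) = C(ℓ₁, j₁−p) for all p ∈ {0,…,j₁}, f(w_{k−p}) = C(ℓ₂, j₂−p) for all p ∈ {0,…,j₂}, and for every p with j₁ − 1 ≤ p ≤ k − j₂ + 1: if p − j₁ is odd then f(w_p) = C(ℓ_p, 1) for some ℓ_p ∈ {1,…,n} and these ℓ_p are pairwise distinct, while if p − j₁ is even then f(w_p) = C(·,0). (Here C(ℓ,0) denotes the branch vertex C(·,0).) -/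

import Mathlib

/-- Vertices of the infinite n-od graph `C`: a branch vertex, and nodes `C(ℓ,j)`
(intended for `1 ≤ ℓ ≤ n`, `j ≥ 1`). -/
inductive NOdVert : Type where
  | branch : NOdVert
  | node : ℕ → ℕ → NOdVert
deriving DecidableEq

/-- `cv ℓ j` denotes the vertex `C(ℓ,j)`, where `C(ℓ,0)` is the branch vertex. -/
def cv (ℓ j : ℕ) : NOdVert := if j = 0 then NOdVert.branch else NOdVert.node ℓ j

/-- Adjacency in the infinite n-od `C`: `C(ℓ,j)` is adjacent to `C(ℓ,j+1)` for
`1 ≤ ℓ ≤ n` and `j ≥ 0` (the case `j = 0` gives branch–`C(ℓ,1)` edges). -/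
def nodAdj (n : ℕ) (u v : NOdVert) : Prop :=
  ∃ ℓ j, 1 ≤ ℓ ∧ ℓ ≤ n ∧
    ((u = cv ℓ j ∧ v = cv ℓ (j + 1)) ∨ (v = cv ℓ j ∧ u = cv ℓ (j + 1)))

/-- The point `b(i,t) = ((1+t)cos(iπ/n), (1+t)sin(iπ/n))` in the plane. -/
noncomputable def bpt (n i : ℕ) (t : ℝ) : ℝ × ℝ :=
  ((1 + t) * Real.cos (i * Real.pi / n), (1 + t) * Real.sin (i * Real.pi / n))

/-- The origin `o` of the plane. -/
def origin : ℝ × ℝ := (0, 0)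

/-- A placement function: on each edge of `G`, one endpoint maps to `o` and the
other to some `b(i,t)` with `i ∈ {0,…,n}`, `t ∈ [0,1]`. -/
def IsPlacement {V : Type*} (n : ℕ) (G : SimpleGraph V) (ω : V → ℝ × ℝ) : Prop :=
  ∀ u v, G.Adj u v →
    (ω u = origin ∧ ∃ i ≤ n, ∃ t ∈ Set.Icc (0 : ℝ) 1, ω v = bpt n i t) ∨
    (ω v = origin ∧ ∃ i ≤ n, ∃ t ∈ Set.Icc (0 : ℝ) 1, ω u = bpt n i t)

/-- Condition (C1). -/
def CondC1 {V : Type*} (n : ℕ) (ω : V → ℝ × ℝ) (f : V → NOdVert) : Prop :=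
  ∀ u v, f u = f v →
    (ω u = origin ∧ ω v = origin) ∨
    ∃ i ≤ n, ∃ s ∈ Set.Icc (0 : ℝ) 1, ∃ t ∈ Set.Icc (0 : ℝ) 1,
      ω u = bpt n i s ∧ ω v = bpt n i t

/-- Condition (C2): `f` maps adjacent vertices of `G` to adjacent vertices of `C`. -/
def CondC2 {V : Type*} (n : ℕ) (G : SimpleGraph V) (f : V → NOdVert) : Prop :=
  ∀ u v, G.Adj u v → nodAdj n (f u) (f v)

/-- `w 0, …, w k` is a wrapping pattern in `G` for the placement function `ω`. -/
def IsWrapping {V : Type*} (n : ℕ) (G : SimpleGraph V) (ω : V → ℝ × ℝ)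
    (w : ℕ → V) (k : ℕ) : Prop :=
  0 < k ∧ 2 * (n + 1) ∣ k ∧
  (∀ p < k, G.Adj (w p) (w (p + 1))) ∧
  (∀ q, 2 * q ≤ k → ∃ t ∈ Set.Icc (0 : ℝ) 1, ω (w (2 * q)) = bpt n (q % (n + 1)) t) ∧
  (∀ q, 2 * q + 1 ≤ k → ω (w (2 * q + 1)) = origin)

/-- The branch-star of `C`: the branch vertex together with `C(ℓ,1)`, `1 ≤ ℓ ≤ n`. -/
def branchStar (n : ℕ) : Set NOdVert :=
  {NOdVert.branch} ∪ {x | ∃ ℓ, 1 ≤ ℓ ∧ ℓ ≤ n ∧ x = NOdVert.node ℓ 1}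

/-- Alternative (a): the wrapping pattern goes away from the branch on leg `ℓ`. -/
def WrapAway {V : Type*} (n : ℕ) (f : V → NOdVert) (w : ℕ → V) (k : ℕ) : Prop :=
  ∃ ℓ, 1 ≤ ℓ ∧ ℓ ≤ n ∧ ∃ j, ∀ p ≤ k, f (w p) = cv ℓ (j + p)

/-- Alternative (b): the wrapping pattern goes toward the branch on leg `ℓ`. -/
def WrapToward {V : Type*} (n : ℕ) (f : V → NOdVert) (w : ℕ → V) (k : ℕ) : Prop :=
  ∃ ℓ, 1 ≤ ℓ ∧ ℓ ≤ n ∧ ∃ j, k ≤ j ∧ ∀ p ≤ k, f (w p) = cv ℓ (j - p)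

/-- Alternative (c): the wrapping pattern goes across the branch from leg `ℓ₁` to
leg `ℓ₂`, with a branch-star trajectory in between. -/
def WrapAcross {V : Type*} (n : ℕ) (f : V → NOdVert) (w : ℕ → V) (k : ℕ) : Prop :=
  ∃ ℓ₁ ℓ₂, 1 ≤ ℓ₁ ∧ ℓ₁ ≤ n ∧ 1 ≤ ℓ₂ ∧ ℓ₂ ≤ n ∧ ℓ₁ ≠ ℓ₂ ∧
    ∃ j₁ j₂, 1 ≤ j₁ ∧ 1 ≤ j₂ ∧ j₁ + j₂ ≤ k ∧
      (∀ p ≤ j₁, f (w p) = cv ℓ₁ (j₁ - p)) ∧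
      (∀ p ≤ j₂, f (w (k - p)) = cv ℓ₂ (j₂ - p)) ∧
      ∃ L : ℕ → ℕ,
        (∀ p, j₁ - 1 ≤ p → p ≤ k - j₂ + 1 →
          ((p + j₁) % 2 = 1 → 1 ≤ L p ∧ L p ≤ n ∧ f (w p) = NOdVert.node (L p) 1) ∧
          ((p + j₁) % 2 = 0 → f (w p) = NOdVert.branch)) ∧
        (∀ p q, j₁ - 1 ≤ p → p ≤ k - j₂ + 1 → j₁ - 1 ≤ q → q ≤ k - j₂ + 1 →
          (p + j₁) % 2 = 1 → (q + j₁) % 2 = 1 → p ≠ q → L p ≠ L q)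

/-- The level (distance from the branch vertex) of a vertex of `C`. -/
def lvl : NOdVert → ℕ
  | .branch => 0
  | .node _ j => j

/-- The leg of a vertex of `C` (0 for the branch vertex). -/
def leg : NOdVert → ℕ
  | .branch => 0
  | .node ℓ _ => ℓ

lemma cv_zero (ℓ : ℕ) : cv ℓ 0 = NOdVert.branch := rfl

lemma cv_of_ne {j : ℕ} (ℓ : ℕ) (h : j ≠ 0) : cv ℓ j = NOdVert.node ℓ j := by
  simp [cv, h]

lemma cv_eq_branch_iff {ℓ j : ℕ} : cv ℓ j = NOdVert.branch ↔ j = 0 := by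
  unfold cv; split <;> simp_all

lemma lvl_cv (ℓ j : ℕ) : lvl (cv ℓ j) = j := by
  unfold cv; split <;> simp_all [lvl]

lemma nodAdj_symm {n : ℕ} {u v : NOdVert} (h : nodAdj n u v) : nodAdj n v u := by
  obtain ⟨ℓ, j, h1, h2, hc⟩ := h
  exact ⟨ℓ, j, h1, h2, hc.symm⟩

lemma adj_branch {n : ℕ} {v : NOdVert} (h : nodAdj n NOdVert.branch v) :
    ∃ ℓ, 1 ≤ ℓ ∧ ℓ ≤ n ∧ v = NOdVert.node ℓ 1 := by
  obtain ⟨ℓ, j, h1, h2, hc | hc⟩ := h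
  · have hj : j = 0 := cv_eq_branch_iff.mp hc.1.symm
    subst hj
    refine ⟨ℓ, h1, h2, ?_⟩
    rw [hc.2]; simp [cv]
  · exact absurd hc.2.symm (by rw [cv_of_ne ℓ (Nat.succ_ne_zero j)]; simp)

lemma adj_node {n ℓ j : ℕ} {v : NOdVert} (h : nodAdj n (NOdVert.node ℓ j) v)
    (hj : 1 ≤ j) : v = NOdVert.node ℓ (j + 1) ∨ v = cv ℓ (j - 1) := by
  obtain ⟨a, b, h1, h2, hc | hc⟩ := h
  · have hb : b ≠ 0 := by
      intro h0; subst h0; exact absurd hc.1 (by rw [cv_zero]; simp)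
    rw [cv_of_ne a hb] at hc
    have he := hc.1
    simp only [NOdVert.node.injEq] at he
    obtain ⟨rfl, rfl⟩ := he
    exact Or.inl (by rw [hc.2, cv_of_ne ℓ (Nat.succ_ne_zero j)])
  · rw [cv_of_ne a (Nat.succ_ne_zero b)] at hc
    have he := hc.2
    simp only [NOdVert.node.injEq] at he
    obtain ⟨rfl, he2⟩ := he
    exact Or.inr (by rw [hc.1]; congr 1; omega)

lemma bpt_ne_origin (n i : ℕ) {t : ℝ} (ht : t ∈ Set.Icc (0:ℝ) 1) :
    bpt n i t ≠ origin := by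
  intro h
  have h1 : (1 + t) * Real.cos (i * Real.pi / n) = 0 := congrArg Prod.fst h
  have h2 : (1 + t) * Real.sin (i * Real.pi / n) = 0 := congrArg Prod.snd h
  have hpos : (0:ℝ) < 1 + t := by have := ht.1; linarith
  have hc : Real.cos (i * Real.pi / n) = 0 :=
    (mul_eq_zero.mp h1).resolve_left (ne_of_gt hpos)
  have hs : Real.sin (i * Real.pi / n) = 0 :=
    (mul_eq_zero.mp h2).resolve_left (ne_of_gt hpos)
  have := Real.sin_sq_add_cos_sq (i * Real.pi / n)
  rw [hc, hs] at this; norm_num at this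

lemma bpt_inj {n : ℕ} (hn : 1 ≤ n) {i i' : ℕ} (hi : i ≤ n) (hi' : i' ≤ n)
    {s t : ℝ} (hs : s ∈ Set.Icc (0:ℝ) 1) (ht : t ∈ Set.Icc (0:ℝ) 1)
    (h : bpt n i s = bpt n i' t) : i = i' := by
  have h1 : (1 + s) * Real.cos (i * Real.pi / n) =
      (1 + t) * Real.cos (i' * Real.pi / n) := congrArg Prod.fst h
  have h2 : (1 + s) * Real.sin (i * Real.pi / n) =
      (1 + t) * Real.sin (i' * Real.pi / n) := congrArg Prod.snd h
  have hsp : (0:ℝ) < 1 + s := by have := hs.1; linarith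
  have htp : (0:ℝ) < 1 + t := by have := ht.1; linarith
  have e1 := Real.sin_sq_add_cos_sq (i * Real.pi / n)
  have e2 := Real.sin_sq_add_cos_sq (i' * Real.pi / n)
  have A : ((1+s) * Real.sin (i * Real.pi / n))^2
      + ((1+s) * Real.cos (i * Real.pi / n))^2 = (1+s)^2 := by
    linear_combination (1+s)^2 * e1
  have B : ((1+t) * Real.sin (i' * Real.pi / n))^2
      + ((1+t) * Real.cos (i' * Real.pi / n))^2 = (1+t)^2 := by
    linear_combination (1+t)^2 * e2
  rw [h1, h2] at A
  have hsq : (1+s)^2 = (1+t)^2 := A.symm.trans B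
  have hst : (1 + s) = (1 + t) := by
    nlinarith [hsq, hsp, htp, sq_nonneg ((1+s) - (1+t)), sq_nonneg ((1+s) + (1+t))]
  have hcos : Real.cos (i * Real.pi / n) = Real.cos (i' * Real.pi / n) := by
    rw [hst] at h1
    exact mul_left_cancel₀ (ne_of_gt htp) h1
  have hn0 : (0:ℝ) < n := by exact_mod_cast Nat.pos_of_ne_zero (by omega)
  have hpi := Real.pi_pos
  have hmem : ∀ m : ℕ, m ≤ n → (m : ℝ) * Real.pi / n ∈ Set.Icc 0 Real.pi := by
    intro m hm
    constructor
    · positivity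
    · rw [div_le_iff₀ hn0]
      have : (m : ℝ) ≤ n := by exact_mod_cast hm
      nlinarith
  have heq := Real.injOn_cos (hmem i hi) (hmem i' hi') hcos
  rw [div_left_inj' hn0.ne', mul_left_inj' hpi.ne'] at heq
  exact_mod_cast heq
theorem stmt17 {V : Type*} (n : ℕ) (hn : 2 ≤ n) (G : SimpleGraph V)
    (ω : V → ℝ × ℝ) (hω : IsPlacement n G ω)
    (f : V → NOdVert) (h1 : CondC1 n ω f) (h2 : CondC2 n G f)
    (w : ℕ → V) (k : ℕ) (hw : IsWrapping n G ω w k) :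
    (WrapAway n f w k ∨ WrapToward n f w k ∨ WrapAcross n f w k) ∧
    ¬ (WrapAway n f w k ∧ WrapToward n f w k) ∧
    ¬ (WrapAway n f w k ∧ WrapAcross n f w k) ∧
    ¬ (WrapToward n f w k ∧ WrapAcross n f w k) := by
  obtain ⟨hk, hdvd, hadj, heven, hodd⟩ := hw
  obtain ⟨c, hc⟩ := hdvd
  have hck : 1 ≤ c := by nlinarith
  have hk6 : 2 * (n + 1) ≤ k := by nlinarith
  have hk2 : k % 2 = 0 := by
    have he2 : ∃ e, k = 2 * e := ⟨(n + 1) * c, by rw [hc]; ring⟩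
    obtain ⟨e, he⟩ := he2; omega
  -- adjacency of images
  have hadjC : ∀ p, p < k → nodAdj n (f (w p)) (f (w (p + 1))) :=
    fun p hp => h2 _ _ (hadj p hp)
  -- key fact: equal images at even positions force congruent indices mod n+1
  have hkey1 : ∀ q q', 2 * q ≤ k → 2 * q' ≤ k →
      f (w (2 * q)) = f (w (2 * q')) → q % (n + 1) = q' % (n + 1) := by
    intro q q' hq hq' heq
    obtain ⟨t, ht, hbt⟩ := heven q hq
    obtain ⟨t', ht', hbt'⟩ := heven q' hq'
    rcases h1 _ _ heq with ⟨ho, _⟩ | ⟨i, hi, s, hs, u, hu, h3, h4⟩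
    · exact absurd (hbt.symm.trans ho) (bpt_ne_origin n _ ht)
    · have e1 : i = q % (n + 1) :=
        bpt_inj (by omega) hi (Nat.lt_succ_iff.mp (Nat.mod_lt _ (by omega))) hs ht (h3.symm.trans hbt)
      have e2 : i = q' % (n + 1) :=
        bpt_inj (by omega) hi (Nat.lt_succ_iff.mp (Nat.mod_lt _ (by omega))) hu ht' (h4.symm.trans hbt')
      rw [← e1, ← e2]
  -- equal images cannot occur at positions of distinct parity
  have hkey2 : ∀ q q', 2 * q ≤ k → 2 * q' + 1 ≤ k →
      f (w (2 * q)) ≠ f (w (2 * q' + 1)) := by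
    intro q q' hq hq' heq
    obtain ⟨t, ht, hbt⟩ := heven q hq
    rcases h1 _ _ heq with ⟨ho, _⟩ | ⟨i, hi, s, hs, u, hu, h3, h4⟩
    · exact absurd (hbt.symm.trans ho) (bpt_ne_origin n _ ht)
    · exact absurd (h4.symm.trans (hodd q' hq')) (bpt_ne_origin n _ hu)
  have hparity : ∀ p p', p ≤ k → p' ≤ k → f (w p) = f (w p') → p % 2 = p' % 2 := by
    intro p p' hp hp' heq
    rcases Nat.mod_two_eq_zero_or_one p with h | h <;>
      rcases Nat.mod_two_eq_zero_or_one p' with h' | h'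
    · omega
    · exact absurd (by rw [show 2 * (p / 2) = p by omega,
        show 2 * (p' / 2) + 1 = p' by omega]; exact heq)
        (hkey2 (p / 2) (p' / 2) (by omega) (by omega))
    · exact absurd (by rw [show 2 * (p' / 2) = p' by omega,
        show 2 * (p / 2) + 1 = p by omega]; exact heq.symm)
        (hkey2 (p' / 2) (p / 2) (by omega) (by omega))
    · omega
  -- equal images at even positions at distance < 2(n+1) are impossible
  have hkey3 : ∀ p p', p % 2 = 0 → p' % 2 = 0 → p < p' → p' ≤ k →
      p' < p + 2 * (n + 1) → f (w p) ≠ f (w p') := by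
    intro p p' he he' hlt hp' hd heq
    have := hkey1 (p / 2) (p' / 2) (by omega) (by omega)
      (by rw [show 2 * (p / 2) = p by omega, show 2 * (p' / 2) = p' by omega]
          exact heq)
    have hdvd2 : (n + 1) ∣ (p' / 2 - p / 2) :=
      (Nat.modEq_iff_dvd' (by omega)).mp this
    obtain ⟨d, hd2⟩ := hdvd2
    rcases Nat.eq_zero_or_pos d with rfl | hd1
    · simp at hd2; omega
    · have hge : n + 1 ≤ (n + 1) * d := Nat.le_mul_of_pos_right _ hd1
      omega
  -- shape of images along the pattern
  have hshape : ∀ p, p ≤ k → f (w p) = NOdVert.branch ∨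
      ∃ ℓ j, 1 ≤ ℓ ∧ ℓ ≤ n ∧ 1 ≤ j ∧ f (w p) = NOdVert.node ℓ j := by
    intro p hp
    rcases eq_or_lt_of_le hp with rfl | hlt
    · have h := hadjC (p - 1) (by omega)
      rw [show p - 1 + 1 = p by omega] at h
      obtain ⟨a, b, hb1, hb2, hcs | hcs⟩ := h
      · rcases Nat.eq_zero_or_pos (b + 1) with h0 | h0
        · omega
        · exact Or.inr ⟨a, b + 1, hb1, hb2, by omega, by rw [hcs.2, cv_of_ne a (by omega)]⟩
      · rcases Nat.eq_zero_or_pos b with h0 | h0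
        · exact Or.inl (by rw [hcs.1, h0, cv_zero])
        · exact Or.inr ⟨a, b, hb1, hb2, h0, by rw [hcs.1, cv_of_ne a (by omega)]⟩
    · obtain ⟨a, b, hb1, hb2, hcs | hcs⟩ := hadjC p hlt
      · rcases Nat.eq_zero_or_pos b with h0 | h0
        · exact Or.inl (by rw [hcs.1, h0, cv_zero])
        · exact Or.inr ⟨a, b, hb1, hb2, h0, by rw [hcs.1, cv_of_ne a (by omega)]⟩
      · exact Or.inr ⟨a, b + 1, hb1, hb2, by omega, by rw [hcs.2, cv_of_ne a (by omega)]⟩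
  -- no extremum away from the branch
  have hnoext : ∀ p, p + 2 ≤ k → f (w p) = f (w (p + 2)) → f (w p) = NOdVert.branch := by
    intro p hp heq
    rcases Nat.mod_two_eq_zero_or_one p with hpe | hpe
    · exact absurd heq (hkey3 p (p + 2) hpe (by omega) (by omega) hp (by omega))
    · rcases hshape p (by omega) with hbr | ⟨ℓ, j, hl1, hl2, hj1, hx⟩
      · exact hbr
      · exfalso
        have hp3 : p + 3 ≤ k := by omega
        -- neighbors of node ℓ j
        have hA1 : f (w (p + 1)) = NOdVert.node ℓ (j + 1) ∨ f (w (p + 1)) = cv ℓ (j - 1) := by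
          have h := hadjC p (by omega); rw [hx] at h; exact adj_node h hj1
        have hA2 : f (w (p + 3)) = NOdVert.node ℓ (j + 1) ∨ f (w (p + 3)) = cv ℓ (j - 1) := by
          have h := hadjC (p + 2) (by omega)
          rw [show p + 2 + 1 = p + 3 by rfl] at h
          rw [heq.symm, hx] at h; exact adj_node h hj1
        have hA0 : f (w (p - 1)) = NOdVert.node ℓ (j + 1) ∨ f (w (p - 1)) = cv ℓ (j - 1) := by
          have h := hadjC (p - 1) (by omega)
          rw [show p - 1 + 1 = p by omega, hx] at h
          exact adj_node (nodAdj_symm h) hj1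
        have hne1 : f (w (p - 1)) ≠ f (w (p + 1)) :=
          hkey3 (p - 1) (p + 1) (by omega) (by omega) (by omega) (by omega) (by omega)
        have hne2 : f (w (p + 1)) ≠ f (w (p + 3)) :=
          hkey3 (p + 1) (p + 3) (by omega) (by omega) (by omega) (by omega) (by omega)
        have hne3 : f (w (p - 1)) ≠ f (w (p + 3)) :=
          hkey3 (p - 1) (p + 3) (by omega) (by omega) (by omega) (by omega) (by omega)
        have hd : NOdVert.node ℓ (j + 1) ≠ cv ℓ (j - 1) := by
          intro h; have := congrArg lvl h; rw [lvl_cv] at this; simp [lvl] at this; omega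
        rcases hA0 with h0 | h0 <;> rcases hA1 with ha1 | ha1 <;>
          rcases hA2 with ha2 | ha2 <;>
          first
            | exact hne1 (h0.trans ha1.symm)
            | exact hne2 (ha1.trans ha2.symm)
            | exact hne3 (h0.trans ha2.symm)
  -- ascending runs
  have run_up : ∀ a ℓ j, 1 ≤ j → a + 1 ≤ k → f (w a) = NOdVert.node ℓ j →
      f (w (a + 1)) = NOdVert.node ℓ (j + 1) →
      ∀ s, 1 ≤ s → a + s ≤ k → f (w (a + s)) = NOdVert.node ℓ (j + s) := by
    intro a ℓ j hj h1k hxa hxa1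
    have key : ∀ s, a + s + 1 ≤ k →
        f (w (a + s)) = NOdVert.node ℓ (j + s) ∧
        f (w (a + s + 1)) = NOdVert.node ℓ (j + s + 1) := by
      intro s
      induction s with
      | zero => intro _; exact ⟨hxa, hxa1⟩
      | succ t ih =>
        intro h
        obtain ⟨ih1, ih2⟩ := ih (by omega)
        refine ⟨ih2, ?_⟩
        have hadj' := hadjC (a + t + 1) (by omega)
        rw [ih2] at hadj'
        rcases adj_node hadj' (by omega) with h2 | h2
        · exact h2
        · exfalso
          have h2' : f (w (a + t + 1 + 1)) = NOdVert.node ℓ (j + t) := by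
            rw [h2, show j + t + 1 - 1 = j + t by omega, cv_of_ne ℓ (by omega)]
          have hbr := hnoext (a + t) (by omega) (ih1.trans h2'.symm)
          rw [ih1] at hbr
          exact NOdVert.noConfusion hbr
    intro s hs hsk
    obtain ⟨t, rfl⟩ : ∃ t, s = t + 1 := ⟨s - 1, by omega⟩
    exact (key t (by omega)).2
  -- ascending run starting at a branch visit
  have ascend0 : ∀ a ℓ, a + 1 ≤ k → f (w (a + 1)) = NOdVert.node ℓ 1 →
      (a + 2 ≤ k → f (w (a + 2)) = NOdVert.node ℓ 2) →
      ∀ s, 1 ≤ s → a + s ≤ k → f (w (a + s)) = NOdVert.node ℓ s := by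
    intro a ℓ h1k hx1 hx2 s hs hsk
    rcases eq_or_lt_of_le hs with rfl | hs2
    · exact hx1
    · have h2 := hx2 (by omega)
      have := run_up (a + 1) ℓ 1 (by omega) (by omega) hx1 h2 (s - 1) (by omega) (by omega)
      rw [show a + 1 + (s - 1) = a + s by omega, show 1 + (s - 1) = s by omega] at this
      exact this
  -- descending run (indices decreasing) anchored at a minimal branch visit
  have run_down : ∀ a ℓ, a ≤ k → 1 ≤ a → f (w a) = NOdVert.branch →
      f (w (a - 1)) = NOdVert.node ℓ 1 →
      (∀ p, p < a → f (w p) ≠ NOdVert.branch) →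
      ∀ s, 1 ≤ s → s ≤ a → f (w (a - s)) = NOdVert.node ℓ s := by
    intro a ℓ hak ha1 hxa hxa1 hmin
    have key : ∀ s, s + 1 ≤ a →
        f (w (a - s)) = cv ℓ s ∧ f (w (a - s - 1)) = NOdVert.node ℓ (s + 1) := by
      intro s
      induction s with
      | zero => intro _; exact ⟨by rw [Nat.sub_zero, hxa, cv_zero], hxa1⟩
      | succ t ih =>
        intro h
        obtain ⟨ih1, ih2⟩ := ih (by omega)
        refine ⟨by rw [show a - (t+1) = a - t - 1 by omega, ih2, cv_of_ne ℓ (by omega)], ?_⟩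
        have hadj' := hadjC (a - t - 2) (by omega)
        rw [show a - t - 2 + 1 = a - t - 1 by omega, ih2] at hadj'
        rcases adj_node (nodAdj_symm hadj') (by omega) with h2 | h2
        · rw [show a - (t+1) - 1 = a - t - 2 by omega]; exact h2
        · exfalso
          rw [show t + 1 - 1 = t by omega, ← ih1] at h2
          have hbr := hnoext (a - t - 2) (by omega)
            (by rw [show a - t - 2 + 2 = a - t by omega]; exact h2)
          exact hmin (a - t - 2) (by omega) hbr
    intro s hs hsa
    obtain ⟨t, rfl⟩ : ∃ t, s = t + 1 := ⟨s - 1, by omega⟩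
    have := (key t (by omega)).2
    rw [show a - t - 1 = a - (t + 1) by omega] at this
    exact this
  -- forward descending run from position 0
  have run_desc : ∀ ℓ j, 2 ≤ j → f (w 0) = NOdVert.node ℓ j →
      f (w 1) = NOdVert.node ℓ (j - 1) →
      (∀ p, p ≤ k → f (w p) ≠ NOdVert.branch) →
      ∀ p, p ≤ k → f (w p) = NOdVert.node ℓ (j - p) ∧ p < j := by
    intro ℓ j hj hx0 hx1 hnb
    have key : ∀ s, s + 1 ≤ k →
        f (w s) = NOdVert.node ℓ (j - s) ∧
        f (w (s + 1)) = NOdVert.node ℓ (j - s - 1) ∧ s + 1 < j := by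
      intro s
      induction s with
      | zero => intro _; exact ⟨hx0, hx1, by omega⟩
      | succ t ih =>
        intro h
        obtain ⟨ih1, ih2, ih3⟩ := ih (by omega)
        refine ⟨ih2, ?_, ?_⟩
        · have hadj' := hadjC (t + 1) (by omega)
          rw [ih2] at hadj'
          rcases adj_node hadj' (by omega) with h2 | h2
          · exfalso
            rw [show j - t - 1 + 1 = j - t by omega, ← ih1] at h2
            have hbr := hnoext t (by omega) h2.symm
            exact hnb t (by omega) hbr
          · have hb2 : j - t - 1 - 1 ≠ 0 := by
              intro h0
              rw [h0, cv_zero] at h2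
              exact hnb (t + 2) (by omega) h2
            rw [cv_of_ne ℓ hb2] at h2
            exact h2
        · have hadj2 := hadjC (t + 1) (by omega)
          rw [ih2] at hadj2
          rcases adj_node hadj2 (by omega) with h2 | h2
          · exfalso
            rw [show j - t - 1 + 1 = j - t by omega, ← ih1] at h2
            have hbr := hnoext t (by omega) h2.symm
            exact hnb t (by omega) hbr
          · have hb2 : j - t - 1 - 1 ≠ 0 := by
              intro h0
              rw [h0, cv_zero] at h2
              exact hnb (t + 2) (by omega) h2
            omega
    intro p hp
    rcases eq_or_lt_of_le hp with rfl | hlt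
    · obtain ⟨hu1, hu2, hu3⟩ := key (p - 1) (by omega)
      rw [show p - 1 + 1 = p by omega] at hu2 hu3
      rw [show j - (p - 1) - 1 = j - p by omega] at hu2
      exact ⟨hu2, hu3⟩
    · obtain ⟨hu1, hu2, hu3⟩ := key p (by omega)
      exact ⟨hu1, by omega⟩
  have hmain : WrapAway n f w k ∨ WrapToward n f w k ∨ WrapAcross n f w k := by
    by_cases hB : ∃ p, p ≤ k ∧ f (w p) = NOdVert.branch
    · obtain ⟨p0, hp0k, hp0b⟩ := hB
      -- least branch visit m
      obtain ⟨m, ⟨hmk, hmb⟩, hmmin⟩ : ∃ m, (m ≤ k ∧ f (w m) = NOdVert.branch) ∧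
          ∀ p, (p ≤ k ∧ f (w p) = NOdVert.branch) → m ≤ p := by
        classical
        have hB' : ∃ p, p ≤ k ∧ f (w p) = NOdVert.branch := ⟨p0, hp0k, hp0b⟩
        exact ⟨Nat.find hB', Nat.find_spec hB', fun p hp => Nat.find_min' hB' hp⟩
      -- greatest branch visit M
      obtain ⟨M, ⟨hMk, hMb⟩, hMmax⟩ : ∃ M, (M ≤ k ∧ f (w M) = NOdVert.branch) ∧
          ∀ p, p ≤ k → f (w p) = NOdVert.branch → p ≤ M := by
        classical
        have hB2 : ∃ p, p ≤ k ∧ f (w (k - p)) = NOdVert.branch :=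
          ⟨k - p0, by omega, by rw [show k - (k - p0) = p0 by omega]; exact hp0b⟩
        refine ⟨k - Nat.find hB2, ⟨by omega, (Nat.find_spec hB2).2⟩, ?_⟩
        intro p hpk hpb
        have := Nat.find_min' hB2 (m := k - p)
          ⟨by omega, by rw [show k - (k - p) = p by omega]; exact hpb⟩
        omega
      have hmM : m ≤ M := hMmax m hmk hmb
      have hparb : ∀ p, p ≤ k → f (w p) = NOdVert.branch → p % 2 = m % 2 :=
        fun p hp hb => hparity p m hp hmk (hb.trans hmb.symm)
      have hnob : ∀ p, p ≤ k → (p < m ∨ M < p) → f (w p) ≠ NOdVert.branch := by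
        intro p hp hor hb
        rcases hor with h | h
        · exact absurd (hmmin p ⟨hp, hb⟩) (by omega)
        · exact absurd (hMmax p hp hb) (by omega)
      have hnext : ∀ p, p ≤ k → f (w p) = NOdVert.branch → p < M →
          f (w (p + 2)) = NOdVert.branch := by
        intro p hpk hpb hpM
        have hpar1 := hparb p hpk hpb
        have hparM := hparb M hMk hMb
        have hp2 : p + 2 ≤ M := by omega
        have hadjp := hadjC p (by omega)
        rw [hpb] at hadjp
        obtain ⟨ℓ, hl1, hl2, hx1⟩ := adj_branch hadjp
        have hadjp1 := hadjC (p + 1) (by omega)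
        rw [hx1] at hadjp1
        rcases adj_node hadjp1 le_rfl with h2 | h2
        · exfalso
          have hres := run_up (p + 1) ℓ 1 le_rfl (by omega) hx1 h2
            (M - p - 1) (by omega) (by omega)
          rw [show p + 1 + (M - p - 1) = M by omega] at hres
          rw [hMb] at hres
          exact NOdVert.noConfusion hres
        · rw [show (1:ℕ) - 1 = 0 by rfl, cv_zero] at h2
          exact h2
      have hchain : ∀ s, m + 2 * s ≤ M → f (w (m + 2 * s)) = NOdVert.branch := by
        intro s
        induction s with
        | zero => intro _; simpa using hmb
        | succ t ih =>
          intro h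
          have hb3 := ih (by omega)
          have hb4 := hnext (m + 2 * t) (by omega) hb3 (by omega)
          rw [show m + 2 * t + 2 = m + 2 * (t + 1) by omega] at hb4
          exact hb4
      have hbmem : ∀ p, m ≤ p → p ≤ M → p % 2 = m % 2 → f (w p) = NOdVert.branch := by
        intro p hp1 hp2 hp3
        have he : p = m + 2 * ((p - m) / 2) := by omega
        rw [he]; exact hchain _ (by omega)
      have hEvenM : m % 2 = 0 → M = m := by
        intro he
        by_contra hne
        have hlt : m < M := by omega
        have hb3 := hnext m hmk hmb hlt
        have hparM := hparb M hMk hMb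
        exact hkey3 m (m + 2) he (by omega) (by omega) (by omega) (by omega)
          (hmb.trans hb3.symm)
      by_cases hm0 : m = 0
      · -- branch at position 0 : ascending pattern (a)
        subst hm0
        have hM0 : M = 0 := hEvenM (by omega)
        have hadj0 := hadjC 0 hk
        rw [hmb] at hadj0
        obtain ⟨ℓ, hl1, hl2, hx1⟩ := adj_branch hadj0
        have hx2 : f (w 2) = NOdVert.node ℓ 2 := by
          have hadj1 := hadjC 1 (by omega)
          rw [hx1] at hadj1
          rcases adj_node hadj1 le_rfl with h2 | h2
          · exact h2
          · exfalso
            rw [show (1:ℕ) - 1 = 0 by rfl, cv_zero] at h2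
            exact hnob 2 (by omega) (by omega) h2
        have hasc := ascend0 0 ℓ (by omega) hx1 (fun _ => hx2)
        left
        refine ⟨ℓ, hl1, hl2, 0, ?_⟩
        intro p hp
        rcases Nat.eq_zero_or_pos p with rfl | hp1
        · simpa [cv] using hmb
        · have := hasc p (by omega) (by omega)
          rw [Nat.zero_add] at this
          rw [cv_of_ne ℓ (by omega), Nat.zero_add]
          exact this
      · by_cases hMk2 : M = k
        · -- branch at position k : descending pattern (b)
          have hm2 : m % 2 = 0 := by
            have := hparb M hMk hMb
            omega
          have hmk3 : m = k := by
            have := hEvenM hm2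
            omega
          subst hmk3
          have hadjk := hadjC (m - 1) (by omega)
          rw [show m - 1 + 1 = m by omega, hmb] at hadjk
          obtain ⟨ℓ, hl1, hl2, hx1⟩ := adj_branch (nodAdj_symm hadjk)
          have hrd := run_down m ℓ le_rfl (by omega) hmb hx1
            (fun p hp => hnob p (by omega) (by omega))
          right; left
          refine ⟨ℓ, hl1, hl2, m, le_rfl, ?_⟩
          intro p hp
          rcases eq_or_lt_of_le hp with rfl | hlt
          · rw [show p - p = 0 by omega, cv_zero]; exact hmb
          · have := hrd (m - p) (by omega) (by omega)
            rw [show m - (m - p) = p by omega] at this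
            rw [cv_of_ne ℓ (by omega)]
            exact this
        · -- interior branch visits : across pattern (c)
          have hm1 : 1 ≤ m := by omega
          have hMltk : M < k := by omega
          have hMp : M % 2 = m % 2 := hparb M hMk hMb
          -- descending entry on leg ℓ₁
          have hadjm := hadjC (m - 1) (by omega)
          rw [show m - 1 + 1 = m by omega, hmb] at hadjm
          obtain ⟨ℓ₁, hL11, hL12, hxm1⟩ := adj_branch (nodAdj_symm hadjm)
          have hdesc := run_down m ℓ₁ (by omega) hm1 hmb hxm1
            (fun p hp => hnob p (by omega) (by omega))
          -- ascending exit on leg ℓ₂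
          have hadjM := hadjC M (by omega)
          rw [hMb] at hadjM
          obtain ⟨ℓ₂, hL21, hL22, hxM1⟩ := adj_branch hadjM
          have hxM2 : M + 2 ≤ k → f (w (M + 2)) = NOdVert.node ℓ₂ 2 := by
            intro h2k
            have hadjM1 := hadjC (M + 1) (by omega)
            rw [hxM1] at hadjM1
            rcases adj_node hadjM1 le_rfl with h2 | h2
            · exact h2
            · exfalso
              rw [show (1:ℕ) - 1 = 0 by rfl, cv_zero] at h2
              exact hnob (M + 2) (by omega) (by omega) h2
          have hasc := ascend0 M ℓ₂ (by omega) hxM1 hxM2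
          -- middle positions of odd displacement carry level-1 nodes
          have hmidnode : ∀ p, m - 1 ≤ p → p ≤ M + 1 → (p + m) % 2 = 1 →
              ∃ ℓ, 1 ≤ ℓ ∧ ℓ ≤ n ∧ f (w p) = NOdVert.node ℓ 1 := by
            intro p h1p h2p h3p
            by_cases he1 : p = m - 1
            · exact ⟨ℓ₁, hL11, hL12, by rw [he1]; exact hxm1⟩
            by_cases he2 : p = M + 1
            · exact ⟨ℓ₂, hL21, hL22, by rw [he2]; exact hxM1⟩
            have hpm : m + 1 ≤ p ∧ p ≤ M - 1 := by omega
            have hbp : f (w (p - 1)) = NOdVert.branch :=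
              hbmem (p - 1) (by omega) (by omega) (by omega)
            have hadjp := hadjC (p - 1) (by omega)
            rw [show p - 1 + 1 = p by omega, hbp] at hadjp
            exact adj_branch hadjp
          -- pigeonhole: the middle zigzag is short
          have hbound : M + 2 ≤ m + 2 * n := by
            by_contra hcon
            have hM2n : m + 2 * n ≤ M := by omega
            have hm2 : m % 2 = 1 := by
              rcases Nat.mod_two_eq_zero_or_one m with h | h
              · have := hEvenM h; omega
              · exact h
            have hmem2 : ∀ t, t ≤ n →
                ∃ ℓ, 1 ≤ ℓ ∧ ℓ ≤ n ∧ f (w (m - 1 + 2 * t)) = NOdVert.node ℓ 1 := by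
              intro t ht
              exact hmidnode (m - 1 + 2 * t) (by omega) (by omega) (by omega)
            have haux : ∀ t t', t < t' → t' ≤ n →
                leg (f (w (m - 1 + 2 * t))) ≠ leg (f (w (m - 1 + 2 * t'))) := by
              intro t t' hlt ht' hleq
              obtain ⟨ℓa, ha1, ha2, ha⟩ := hmem2 t (by omega)
              obtain ⟨ℓb, hb1, hb2, hb⟩ := hmem2 t' ht'
              rw [ha, hb] at hleq
              simp only [leg] at hleq
              exact hkey3 (m - 1 + 2 * t) (m - 1 + 2 * t') (by omega) (by omega)
                (by omega) (by omega) (by omega) (by rw [ha, hb, hleq])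
            have hcard := Finset.card_le_card_of_injOn
              (fun t => leg (f (w (m - 1 + 2 * t))))
              (s := Finset.range (n + 1)) (t := Finset.Icc 1 n)
              (by
                intro t ht
                simp only [Finset.mem_coe, Finset.mem_range] at ht
                obtain ⟨ℓa, ha1, ha2, ha⟩ := hmem2 t (by omega)
                simp only [Finset.coe_Icc, Set.mem_Icc, Finset.mem_coe, Finset.mem_Icc]
                rw [ha]
                exact ⟨ha1, ha2⟩)
              (by
                intro t ht t' ht' he
                simp only [Finset.coe_range, Set.mem_Iio, Finset.mem_coe,
                  Finset.mem_range] at ht ht'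
                by_contra hne
                rcases lt_or_gt_of_ne hne with hlt | hlt
                · exact haux t t' hlt (by omega) he
                · exact haux t' t hlt (by omega) he.symm)
            rw [Finset.card_range, Nat.card_Icc] at hcard
            omega
          -- distinctness of middle legs
          have hdist : ∀ p q, m - 1 ≤ p → p ≤ M + 1 → m - 1 ≤ q → q ≤ M + 1 →
              (p + m) % 2 = 1 → (q + m) % 2 = 1 → p ≠ q →
              leg (f (w p)) ≠ leg (f (w q)) := by
            intro p q hp1 hp2 hq1 hq2 hp3 hq3 hpq hleq
            obtain ⟨ℓa, ha1, ha2, ha⟩ := hmidnode p hp1 hp2 hp3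
            obtain ⟨ℓb, hb1, hb2, hb⟩ := hmidnode q hq1 hq2 hq3
            rw [ha, hb] at hleq
            simp only [leg] at hleq
            have heqv : f (w p) = f (w q) := by rw [ha, hb, hleq]
            rcases Nat.mod_two_eq_zero_or_one m with hm2 | hm2
            · -- m even: the middle is just {m-1, m, m+1}
              have hMm := hEvenM hm2
              have hcase : (p = m - 1 ∧ q = m + 1) ∨ (p = m + 1 ∧ q = m - 1) := by
                omega
              have hkey : f (w (m - 1)) = f (w (m + 1)) := by
                rcases hcase with ⟨e1, e2⟩ | ⟨e1, e2⟩
                · rw [← e1, ← e2]; exact heqv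
                · rw [← e1, ← e2]; exact heqv.symm
              have hbr := hnoext (m - 1) (by omega)
                (by rw [show m - 1 + 2 = m + 1 by omega]; exact hkey)
              rcases hcase with ⟨e1, e2⟩ | ⟨e1, e2⟩
              · rw [← e1] at hbr; rw [ha] at hbr; exact NOdVert.noConfusion hbr
              · rw [← e2] at hbr; rw [hb] at hbr; exact NOdVert.noConfusion hbr
            · -- m odd: middle node positions are even, use hkey3
              rcases lt_trichotomy p q with hlt | heq2 | hlt
              · exact hkey3 p q (by omega) (by omega) hlt (by omega) (by omega) heqv
              · exact hpq heq2
              · exact hkey3 q p (by omega) (by omega) hlt (by omega) (by omega) heqv.symm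
          -- assemble alternative (c)
          right; right
          have hne12 : ℓ₁ ≠ ℓ₂ := by
            have := hdist (m - 1) (M + 1) le_rfl (by omega) (by omega) le_rfl
              (by omega) (by omega) (by omega)
            rw [hxm1, hxM1] at this
            simpa only [leg] using this
          have hmidfull : ∀ p, m - 1 ≤ p → p ≤ k - (k - M) + 1 →
              ((p + m) % 2 = 1 → 1 ≤ leg (f (w p)) ∧ leg (f (w p)) ≤ n ∧
                f (w p) = NOdVert.node (leg (f (w p))) 1) ∧
              ((p + m) % 2 = 0 → f (w p) = NOdVert.branch) := by
            intro p h1p h2p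
            have h2p' : p ≤ M + 1 := by omega
            constructor
            · intro hpar
              obtain ⟨ℓ, ha1, ha2, ha⟩ := hmidnode p h1p h2p' hpar
              rw [ha]
              simp only [leg]
              exact ⟨ha1, ha2, by trivial⟩
            · intro hpar
              exact hbmem p (by omega) (by omega) (by omega)
          have hdistfull : ∀ p q, m - 1 ≤ p → p ≤ k - (k - M) + 1 →
              m - 1 ≤ q → q ≤ k - (k - M) + 1 → (p + m) % 2 = 1 →
              (q + m) % 2 = 1 → p ≠ q → leg (f (w p)) ≠ leg (f (w q)) := by
            intro p q h1p h2p h1q h2q hp3 hq3 hpq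
            exact hdist p q h1p (by omega) h1q (by omega) hp3 hq3 hpq
          refine ⟨ℓ₁, ℓ₂, hL11, hL12, hL21, hL22, hne12, m, k - M,
            hm1, by omega, by omega, ?_, ?_,
            fun p => leg (f (w p)), hmidfull, hdistfull⟩
          · -- descending family
            intro p hp
            rcases eq_or_lt_of_le hp with rfl | hlt
            · rw [show p - p = 0 by omega, cv_zero]; exact hmb
            · have := hdesc (m - p) (by omega) (by omega)
              rw [show m - (m - p) = p by omega] at this
              rw [cv_of_ne ℓ₁ (by omega)]
              exact this
          · -- ascending family
            intro p hp
            rcases eq_or_lt_of_le hp with rfl | hlt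
            · rw [show k - (k - M) = M by omega, show k - M - (k - M) = 0 by omega,
                cv_zero]
              exact hMb
            · have := hasc (k - M - p) (by omega) (by omega)
              rw [show M + (k - M - p) = k - p by omega] at this
              rw [cv_of_ne ℓ₂ (by omega)]
              exact this
    · -- no branch visit: monotone run on a single leg
      push_neg at hB
      rcases hshape 0 (by omega) with hbr | ⟨ℓ, j, hl1, hl2, hj1, hx0⟩
      · exact absurd hbr (hB 0 (by omega))
      have hadj0 := hadjC 0 hk
      rw [hx0] at hadj0
      rcases adj_node hadj0 hj1 with hup | hdn
      · -- ascending
        left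
        refine ⟨ℓ, hl1, hl2, j, ?_⟩
        intro p hp
        rcases Nat.eq_zero_or_pos p with rfl | hp1
        · rw [cv_of_ne ℓ (by omega)]; simpa using hx0
        · have := run_up 0 ℓ j hj1 (by omega) hx0 hup p (by omega) (by omega)
          rw [Nat.zero_add] at this
          rw [cv_of_ne ℓ (by omega)]; exact this
      · -- descending
        have hj0 : j - 1 ≠ 0 := by
          intro h0
          exact hB 1 (by omega) (by rw [hdn, h0, cv_zero])
        rw [cv_of_ne ℓ hj0] at hdn
        have hdp := run_desc ℓ j (by omega) hx0 hdn hB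
        right; left
        refine ⟨ℓ, hl1, hl2, j, le_of_lt (hdp k le_rfl).2, ?_⟩
        intro p hp
        have h3 := hdp p hp
        rw [cv_of_ne ℓ (by omega)]
        exact h3.1
  refine ⟨hmain, ?_, ?_, ?_⟩
  · rintro ⟨⟨ℓ, _, _, j, ha⟩, ⟨ℓ', _, _, j', hj', hb⟩⟩
    have e0 := congrArg lvl ((ha 0 (by omega)).symm.trans (hb 0 (by omega)))
    rw [lvl_cv, lvl_cv] at e0
    have ek := congrArg lvl ((ha k le_rfl).symm.trans (hb k le_rfl))
    rw [lvl_cv, lvl_cv] at ek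
    omega
  · rintro ⟨⟨ℓ, _, _, j, ha⟩,
      ⟨ℓ₁, ℓ₂, _, _, _, _, _, j₁, j₂, hj1, hj2, hsum, hdesc, _⟩⟩
    have hb1 := hdesc j₁ le_rfl
    rw [show j₁ - j₁ = 0 by omega, cv_zero] at hb1
    have he := congrArg lvl ((ha j₁ (by omega)).symm.trans hb1)
    rw [lvl_cv] at he
    simp only [lvl] at he
    omega
  · rintro ⟨⟨ℓ, _, _, j, hj', ha⟩,
      ⟨ℓ₁, ℓ₂, _, _, _, _, _, j₁, j₂, hj1, hj2, hsum, hdesc, _⟩⟩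
    have hb1 := hdesc j₁ le_rfl
    rw [show j₁ - j₁ = 0 by omega, cv_zero] at hb1
    have he := congrArg lvl ((ha j₁ (by omega)).symm.trans hb1)
    rw [lvl_cv] at he
    simp only [lvl] at he
    omega
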